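/- Let d ∈ M be Archimedean over A (i.e., d admits no ramifier over A). Then for every d' ∈ M, d' and d realize the same cut over A if and only if d − d' ∈ G(d/A). In other words, the cut of d over A coincides with the coset d + G(d/A). -/

import Mathlib

/-- `c` and `d` realize the same cut over the subgroup `A`. -/
def SameCut {M : Type*} [AddCommGroup M] [LinearOrder M] [IsOrderedAddMonoid M] (A : AddSubgroup M) (c d : M) : Prop :=
  ∀ a ∈ A, ((a ≤ c ↔ a ≤ d) ∧ (c ≤ a ↔ d ≤ a))

/-- `Stab(d/A)`: elements `a ∈ A` such that `d + a` and `d` realize the same cut over `A`. -/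
def Stab {M : Type*} [AddCommGroup M] [LinearOrder M] [IsOrderedAddMonoid M] (A : AddSubgroup M) (d : M) : Set M :=
  {a | a ∈ A ∧ SameCut A (d + a) d}

open Classical in
/-- `G(d/A)`. -/
def Gset {M : Type*} [AddCommGroup M] [LinearOrder M] [IsOrderedAddMonoid M] (A : AddSubgroup M) (d : M) : Set M :=
  if d ∈ A then ({0} : Set M)
  else {x | ∀ a ∈ A, a ∉ Stab A d → (-|a| < x ∧ x < |a|)}

/-- `H(d/A)`. -/
def Hset {M : Type*} [AddCommGroup M] [LinearOrder M] [IsOrderedAddMonoid M] (A : AddSubgroup M) (d : M) : Set M :=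
  {x | ∃ a ∈ Stab A d, |x| ≤ |a|}

/-- `Δ(x) ≤ Δ(y)`: `|x| ≤ n • |y|` for some natural number `n`. -/
def DeltaLe {M : Type*} [AddCommGroup M] [LinearOrder M] [IsOrderedAddMonoid M] (x y : M) : Prop :=
  ∃ n : ℕ, |x| ≤ n • |y|

/-- `Δ(x) = Δ(y)`. -/
def DeltaEq {M : Type*} [AddCommGroup M] [LinearOrder M] [IsOrderedAddMonoid M] (x y : M) : Prop :=
  DeltaLe x y ∧ DeltaLe y x

/-- `Δ(x) < Δ(y)`. -/
def DeltaLt {M : Type*} [AddCommGroup M] [LinearOrder M] [IsOrderedAddMonoid M] (x y : M) : Prop :=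
  DeltaLe x y ∧ ¬ DeltaLe y x

/-- `Δ(x) ∈ Δ(A)`. -/
def DeltaMem {M : Type*} [AddCommGroup M] [LinearOrder M] [IsOrderedAddMonoid M] (x : M) (A : AddSubgroup M) : Prop :=
  ∃ a ∈ A, DeltaEq x a

/-- `a` is a ramifier of `d` over `A`: `a ∈ A` and `Δ(d − a) ∉ Δ(A)`. -/
def IsRamifier {M : Type*} [AddCommGroup M] [LinearOrder M] [IsOrderedAddMonoid M] (A : AddSubgroup M) (d a : M) : Prop :=
  a ∈ A ∧ ¬ DeltaMem (d - a) A

/-- `d` is ramified over `A` if it admits a ramifier. -/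
def Ramified {M : Type*} [AddCommGroup M] [LinearOrder M] [IsOrderedAddMonoid M] (A : AddSubgroup M) (d : M) : Prop :=
  ∃ a, IsRamifier A d a

/-- `d` is cut-independent from `B` over `A`: every closed interval with bounds in `B`
containing `d` contains a point of `A`. -/
def CutIndep {M : Type*} [AddCommGroup M] [LinearOrder M] [IsOrderedAddMonoid M] (A B : AddSubgroup M) (d : M) : Prop :=
  ∀ b₁ ∈ B, ∀ b₂ ∈ B, b₁ ≤ d → d ≤ b₂ → ∃ a ∈ A, b₁ ≤ a ∧ a ≤ b₂

section AuxForArch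
variable {M : Type*} [AddCommGroup M] [LinearOrder M] [IsOrderedAddMonoid M] {A : AddSubgroup M} {d d' : M}

lemma sameCut_refl' (c : M) : SameCut A c c := fun _ _ => ⟨Iff.rfl, Iff.rfl⟩

lemma stab_zero' : (0:M) ∈ Stab A d :=
  ⟨A.zero_mem, by simpa using (sameCut_refl' (A := A) d)⟩

lemma stab_neg' {s : M} (hs : s ∈ Stab A d) : -s ∈ Stab A d := by
  obtain ⟨hsA, hc⟩ := hs
  refine ⟨A.neg_mem hsA, fun b hbA => ?_⟩
  obtain ⟨h1, h2⟩ := hc (b + s) (A.add_mem hbA hsA)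
  constructor
  · rw [← sub_eq_add_neg, le_sub_iff_add_le, ← h1]
    exact add_le_add_iff_right s
  · rw [← sub_eq_add_neg, sub_le_iff_le_add, ← h2]
    exact add_le_add_iff_right s

lemma stab_add' {s t : M} (hs : s ∈ Stab A d) (ht : t ∈ Stab A d) :
    s + t ∈ Stab A d := by
  obtain ⟨hsA, hcs⟩ := hs
  obtain ⟨htA, hct⟩ := ht
  refine ⟨A.add_mem hsA htA, fun b hbA => ?_⟩
  obtain ⟨hs1, hs2⟩ := hcs (b - t) (A.sub_mem hbA htA)
  obtain ⟨ht1, ht2⟩ := hct b hbA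
  constructor
  · rw [← add_assoc, ← sub_le_iff_le_add, hs1, sub_le_iff_le_add, ht1]
  · rw [← add_assoc, ← le_sub_iff_add_le, hs2, le_sub_iff_add_le, ht2]

lemma stab_nsmul' {s : M} (hs : s ∈ Stab A d) : ∀ n : ℕ, n • s ∈ Stab A d := by
  intro n
  induction n with
  | zero => simpa using stab_zero'
  | succ k ih => rw [succ_nsmul]; exact stab_add' ih hs

lemma stab_abs' {s : M} (hs : s ∈ Stab A d) : |s| ∈ Stab A d := by
  rcases abs_cases s with ⟨h, _⟩ | ⟨h, _⟩
  · rw [h]; exact hs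
  · rw [h]; exact stab_neg' hs

lemma stab_small_left {s b : M} (hs : s ∈ Stab A d) (hbA : b ∈ A) (hb : b ≤ d) :
    b + |s| ≤ d := by
  have hns : -|s| ∈ Stab A d := stab_neg' (stab_abs' hs)
  have h := ((hns.2 b hbA).1.mpr hb)
  rw [← sub_eq_add_neg, le_sub_iff_add_le] at h
  exact h

lemma stab_small_right {s b : M} (hs : s ∈ Stab A d) (hbA : b ∈ A) (hb : d ≤ b) :
    d + |s| ≤ b := by
  have habs : |s| ∈ Stab A d := stab_abs' hs
  exact (habs.2 b hbA).2.mpr hb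

lemma stab_of_cut_left (hcut : SameCut A d' d) {t : M} (htA : t ∈ A) (ht0 : 0 ≤ t)
    (hle : d' + t ≤ d) : -t ∈ Stab A d := by
  have hle' : d' ≤ d - t := le_sub_iff_add_le.mpr hle
  refine ⟨A.neg_mem htA, fun b hbA => ?_⟩
  obtain ⟨h1, h2⟩ := hcut b hbA
  constructor
  · rw [← sub_eq_add_neg]
    exact ⟨fun hb => hb.trans (sub_le_self d ht0),
      fun hb => (h1.mpr hb).trans hle'⟩
  · rw [← sub_eq_add_neg]
    exact ⟨fun hb => h2.mp (hle'.trans hb),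
      fun hb => (sub_le_self d ht0).trans hb⟩

lemma stab_of_cut_right (hcut : SameCut A d' d) {t : M} (htA : t ∈ A) (ht0 : 0 ≤ t)
    (hle : d + t ≤ d') : t ∈ Stab A d := by
  refine ⟨htA, fun b hbA => ?_⟩
  obtain ⟨h1, h2⟩ := hcut b hbA
  constructor
  · exact ⟨fun hb => h1.mp (hb.trans hle),
      fun hb => hb.trans (le_add_of_nonneg_right ht0)⟩
  · exact ⟨fun hb => (le_add_of_nonneg_right ht0).trans hb,
      fun hb => hle.trans (h2.mpr hb)⟩

/-- Key step: the Archimedean hypothesis together with divisibility of `A` produces a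
non-stabilizer element of `A` dominated by `|d - b|`. -/
lemma exists_nonstab_le (hAdiv : ∀ a ∈ A, ∀ n : ℕ, 0 < n → ∃ b ∈ A, n • b = a)
    (harch : ¬ Ramified A d) {b : M} (hbA : b ∈ A) (hside : b < d ∨ d < b) :
    ∃ a ∈ A, a ∉ Stab A d ∧ |a| ≤ |d - b| := by
  have hmem : DeltaMem (d - b) A := by
    by_contra h; exact harch ⟨b, hbA, h⟩
  obtain ⟨a₀, ha₀A, ⟨n, hn⟩, ⟨m, hm⟩⟩ := hmem
  obtain ⟨a, haA, ha⟩ := hAdiv a₀ ha₀A (m + 1) (Nat.succ_pos m)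
  have habs : (m + 1) • |a| = |a₀| := by rw [← abs_nsmul, ha]
  have hdb : (0:M) < |d - b| := by
    rcases hside with h | h
    · rw [abs_pos, sub_ne_zero]; exact (ne_of_gt h)
    · rw [abs_pos, sub_ne_zero]; exact (ne_of_lt h)
  have hale : |a| ≤ |d - b| := by
    refine le_of_nsmul_le_nsmul_right (Nat.succ_ne_zero m) ?_
    rw [habs]
    calc |a₀| ≤ m • |d - b| := hm
      _ ≤ (m + 1) • |d - b| := by
        rw [succ_nsmul]; exact le_add_of_nonneg_right (abs_nonneg _)
  refine ⟨a, haA, ?_, hale⟩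
  intro haS
  set k := n * (m + 1) with hk
  have hk2 : |d - b| ≤ k • |a| := by
    calc |d - b| ≤ n • |a₀| := hn
      _ = n • ((m + 1) • |a|) := by rw [habs]
      _ = k • |a| := by rw [smul_smul]
  have hks : (k + 1) • a ∈ Stab A d := stab_nsmul' haS (k + 1)
  have hk1 : (k + 1) • |a| ≤ |d - b| := by
    rcases hside with h | h
    · have h2 := stab_small_left hks hbA h.le
      rw [abs_nsmul] at h2
      have h3 : |d - b| = d - b := abs_of_pos (sub_pos.mpr h)
      rw [h3]
      exact le_sub_iff_add_le.mpr (by rwa [add_comm] at h2)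
    · have h2 := stab_small_right hks hbA h.le
      rw [abs_nsmul] at h2
      have h3 : |d - b| = b - d := by
        rw [abs_sub_comm]; exact abs_of_pos (sub_pos.mpr h)
      rw [h3]
      exact le_sub_iff_add_le.mpr (by rwa [add_comm] at h2)
  rw [succ_nsmul] at hk1
  have ha0 : |a| ≤ 0 := (add_le_iff_nonpos_right _).mp (hk1.trans hk2)
  have haz : |a| = 0 := le_antisymm ha0 (abs_nonneg a)
  rw [haz, smul_zero] at hk2
  exact absurd hk2 (not_le.mpr hdb)

end AuxForArch

/-- If `d` is Archimedean over `A` (admits no ramifier over `A`), then the cut of `d`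
over `A` coincides with the coset `d + G(d/A)`: for every `d'`, `d'` and `d`
realize the same cut over `A` iff `d − d' ∈ G(d/A)`. -/
theorem sameCut_iff_sub_mem_Gset_of_arch (M : Type*) [AddCommGroup M] [LinearOrder M] [IsOrderedAddMonoid M]
    (hMdiv : ∀ x : M, ∀ n : ℕ, 0 < n → ∃ y : M, n • y = x)
    (A : AddSubgroup M)
    (hAdiv : ∀ a ∈ A, ∀ n : ℕ, 0 < n → ∃ b ∈ A, n • b = a)
    (d : M) (harch : ¬ Ramified A d) :
    ∀ d' : M, SameCut A d' d ↔ d - d' ∈ Gset A d := by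
  intro d'
  by_cases hdA : d ∈ A
  · simp only [Gset, if_pos hdA, Set.mem_singleton_iff, sub_eq_zero]
    constructor
    · intro h
      have h1 := h d hdA
      exact le_antisymm (h1.1.mpr le_rfl) (h1.2.mpr le_rfl)
    · intro h
      rw [← h]
      exact sameCut_refl' d
  · simp only [Gset, if_neg hdA, Set.mem_setOf_eq]
    constructor
    · intro h a haA haS
      by_contra hcon
      apply haS
      have habsA : |a| ∈ A := by
        rcases abs_cases a with ⟨he, _⟩ | ⟨he, _⟩
        · rw [he]; exact haA
        · rw [he]; exact A.neg_mem haA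
      have habs : |a| ≤ |d - d'| := by
        rcases not_and_or.mp hcon with h1 | h1
        · push_neg at h1
          have h2 := neg_le_neg h1
          rw [neg_neg] at h2
          exact h2.trans (neg_le_abs _)
        · push_neg at h1
          exact h1.trans (le_abs_self _)
      rcases le_or_gt d' d with hle | hlt
      · have heq : |d - d'| = d - d' := abs_of_nonneg (sub_nonneg.mpr hle)
        rw [heq] at habs
        have h1 : d' + |a| ≤ d := by
          rw [add_comm]; exact le_sub_iff_add_le.mp habs
        have h2 := stab_of_cut_left h habsA (abs_nonneg a) h1
        have h3 : |a| ∈ Stab A d := by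
          have h4 := stab_neg' h2; rwa [neg_neg] at h4
        rcases abs_cases a with ⟨he, _⟩ | ⟨he, _⟩
        · rwa [← he]
        · have h5 := stab_neg' h3; rwa [he, neg_neg] at h5
      · have heq : |d - d'| = d' - d := by
          rw [abs_sub_comm]; exact abs_of_pos (sub_pos.mpr hlt)
        rw [heq] at habs
        have h1 : d + |a| ≤ d' := by
          rw [add_comm]; exact le_sub_iff_add_le.mp habs
        have h3 : |a| ∈ Stab A d := stab_of_cut_right h habsA (abs_nonneg a) h1
        rcases abs_cases a with ⟨he, _⟩ | ⟨he, _⟩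
        · rwa [← he]
        · have h5 := stab_neg' h3; rwa [he, neg_neg] at h5
    · intro hx b hbA
      have contra : ∀ c ∈ A, (c < d ∨ d < c) → |d - c| ≤ |d - d'| → False := by
        intro c hcA hside hle
        obtain ⟨a, haA, haS, hale⟩ := exists_nonstab_le hAdiv harch hcA hside
        obtain ⟨hl, hr⟩ := hx a haA haS
        exact absurd (hale.trans hle) (not_le.mpr (abs_lt.mpr ⟨hl, hr⟩))
      constructor
      · constructor
        · intro hbd'
          by_contra hbd
          push_neg at hbd
          have h1 : |d - b| = b - d := by
            rw [abs_sub_comm]; exact abs_of_pos (sub_pos.mpr hbd)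
          have h2 : |d - d'| = d' - d := by
            rw [abs_sub_comm]
            exact abs_of_pos (sub_pos.mpr (lt_of_lt_of_le hbd hbd'))
          exact contra b hbA (Or.inr hbd)
            (by rw [h1, h2]; exact sub_le_sub_right hbd' d)
        · intro hbd
          by_contra hbd'
          push_neg at hbd'
          have hblt : b < d := lt_of_le_of_ne hbd (fun he => hdA (he ▸ hbA))
          have h1 : |d - b| = d - b := abs_of_pos (sub_pos.mpr hblt)
          have h2 : |d - d'| = d - d' := abs_of_pos (sub_pos.mpr (hbd'.trans hblt))
          exact contra b hbA (Or.inl hblt)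
            (by rw [h1, h2]; exact sub_le_sub_left hbd'.le d)
      · constructor
        · intro hd'b
          by_contra hdb
          push_neg at hdb
          have h1 : |d - b| = d - b := abs_of_pos (sub_pos.mpr hdb)
          have h2 : |d - d'| = d - d' :=
            abs_of_pos (sub_pos.mpr (lt_of_le_of_lt hd'b hdb))
          exact contra b hbA (Or.inl hdb)
            (by rw [h1, h2]; exact sub_le_sub_left hd'b d)
        · intro hdb
          by_contra hd'b
          push_neg at hd'b
          have hblt : d < b := lt_of_le_of_ne hdb (fun he => hdA (he ▸ hbA))
          have h1 : |d - b| = b - d := by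
            rw [abs_sub_comm]; exact abs_of_pos (sub_pos.mpr hblt)
          have h2 : |d - d'| = d' - d := by
            rw [abs_sub_comm]; exact abs_of_pos (sub_pos.mpr (hblt.trans hd'b))
          exact contra b hbA (Or.inr hblt)
            (by rw [h1, h2]; exact sub_le_sub_right hd'b.le d)
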